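/- The finite SDP-based formulation SIPR (min F(x) over x ∈ X, λ ∈ ℝ^r₊, α ≥ 0, β ∈ ℝ with α(1+ρ²)+β ≤ 0 and Σⱼλⱼ𝒬ʲ + αI + βE − 𝒬(x) ⪰ 0) is a restriction of the SIP problem: any x that is part of a feasible point of SIPR satisfies G(x,y) ≤ 0 for all y ∈ Y. -/

import Mathlib

open scoped Matrix

/-- The symmetric bordered matrix `[[Q, q], [qᵀ, 2b]]`. -/
def borderMat {n : ℕ} (Q : Matrix (Fin n) (Fin n) ℝ) (q : Fin n → ℝ) (b : ℝ) :
    Matrix (Fin n ⊕ Unit) (Fin n ⊕ Unit) ℝ :=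
  Matrix.fromBlocks Q (Matrix.of fun i _ => q i) (Matrix.of fun _ j => q j)
    (Matrix.of fun _ _ => 2 * b)

/-- `𝒬(x) = ½[[−Q(x), q(x)], [q(x)ᵀ, 2b(x)]]`. -/
noncomputable def objMat {n : ℕ} (Q : Matrix (Fin n) (Fin n) ℝ) (q : Fin n → ℝ) (b : ℝ) :
    Matrix (Fin n ⊕ Unit) (Fin n ⊕ Unit) ℝ :=
  (1 / 2 : ℝ) • borderMat (-Q) q b

/-- `𝒬ʲ = ½[[Qʲ, qʲ], [(qʲ)ᵀ, 2bⱼ]]`. -/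
noncomputable def conMat {n : ℕ} (Q : Matrix (Fin n) (Fin n) ℝ) (q : Fin n → ℝ) (b : ℝ) :
    Matrix (Fin n ⊕ Unit) (Fin n ⊕ Unit) ℝ :=
  (1 / 2 : ℝ) • borderMat Q q b

/-- `E = diag(0, …, 0, 1)`. -/
def EMat (n : ℕ) : Matrix (Fin n ⊕ Unit) (Fin n ⊕ Unit) ℝ :=
  Matrix.fromBlocks 0 0 0 1


noncomputable def qfL {n : ℕ} (y : Fin n → ℝ) :
    Matrix (Fin n ⊕ Unit) (Fin n ⊕ Unit) ℝ →ₗ[ℝ] ℝ where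
  toFun M := Sum.elim y (fun _ => (1:ℝ)) ⬝ᵥ M *ᵥ Sum.elim y (fun _ => (1:ℝ))
  map_add' M N := by simp [Matrix.add_mulVec, dotProduct_add]
  map_smul' c M := by simp [Matrix.smul_mulVec]

lemma qfL_border {n : ℕ} (y : Fin n → ℝ) (Q : Matrix (Fin n) (Fin n) ℝ)
    (q : Fin n → ℝ) (b : ℝ) :
    qfL y (borderMat Q q b) = y ⬝ᵥ Q *ᵥ y + 2 * (q ⬝ᵥ y) + 2 * b := by
  simp [qfL, borderMat, Matrix.fromBlocks_mulVec, dotProduct, Matrix.mulVec,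
    Fintype.sum_sum_type, Finset.sum_add_distrib, Finset.mul_sum, mul_comm]
  simp only [mul_add, Finset.mul_sum, Finset.sum_add_distrib]
  rw [← Finset.sum_mul]
  ring

lemma qfL_one {n : ℕ} (y : Fin n → ℝ) :
    qfL y (1 : Matrix (Fin n ⊕ Unit) (Fin n ⊕ Unit) ℝ) = y ⬝ᵥ y + 1 := by
  simp [qfL, Matrix.one_mulVec, dotProduct, Fintype.sum_sum_type]

lemma qfL_E {n : ℕ} (y : Fin n → ℝ) : qfL y (EMat n) = 1 := by
  simp [qfL, EMat, Matrix.fromBlocks_mulVec, Matrix.one_mulVec, dotProduct,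
    Fintype.sum_sum_type]

/-- The finite SDP-based formulation SIPR is a restriction of the SIP problem:
any `x ∈ X` that is part of a feasible point `(x, λ, α, β)` of SIPR satisfies
`G(x,y) ≤ 0` for all `y ∈ Y`. -/
theorem sipr_is_restriction {m n r : ℕ}
    (Q : EuclideanSpace ℝ (Fin m) → Matrix (Fin n) (Fin n) ℝ) (hQlin : IsLinearMap ℝ Q)
    (hQsymm : ∀ x, (Q x).IsSymm)
    (q : EuclideanSpace ℝ (Fin m) → Fin n → ℝ) (hqlin : IsLinearMap ℝ q)
    (b : EuclideanSpace ℝ (Fin m) → ℝ) (hblin : IsLinearMap ℝ b)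
    (Qc : Fin r → Matrix (Fin n) (Fin n) ℝ) (hQc : ∀ j, (Qc j).IsSymm)
    (qc : Fin r → Fin n → ℝ) (bc : Fin r → ℝ)
    (ρ : ℝ) (hρ : 0 ≤ ρ)
    (hball : ∀ y : Fin n → ℝ,
      (∀ j, (1 / 2) * (y ⬝ᵥ Qc j *ᵥ y) + qc j ⬝ᵥ y + bc j ≤ 0) → y ⬝ᵥ y ≤ ρ ^ 2)
    (X : Set (EuclideanSpace ℝ (Fin m)))
    (x : EuclideanSpace ℝ (Fin m)) (hx : x ∈ X)
    (lam : Fin r → ℝ) (al be : ℝ)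
    (hlam : ∀ j, 0 ≤ lam j) (hal : 0 ≤ al)
    (hfeas1 : al * (1 + ρ ^ 2) + be ≤ 0)
    (hfeas2 : ((∑ j, lam j • conMat (Qc j) (qc j) (bc j))
      + al • (1 : Matrix (Fin n ⊕ Unit) (Fin n ⊕ Unit) ℝ)
      + be • EMat n - objMat (Q x) (q x) (b x)).PosSemidef) :
    ∀ y : Fin n → ℝ,
      (∀ j, (1 / 2) * (y ⬝ᵥ Qc j *ᵥ y) + qc j ⬝ᵥ y + bc j ≤ 0) →
      -(1 / 2) * (y ⬝ᵥ Q x *ᵥ y) + q x ⬝ᵥ y + b x ≤ 0 := by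
  intro y hy
  have hz := hfeas2.dotProduct_mulVec_nonneg (Sum.elim y (fun _ => (1:ℝ)))
  have hqf : (0:ℝ) ≤ qfL y ((∑ j, lam j • conMat (Qc j) (qc j) (bc j))
      + al • (1 : Matrix (Fin n ⊕ Unit) (Fin n ⊕ Unit) ℝ)
      + be • EMat n - objMat (Q x) (q x) (b x)) := by
    simpa [qfL, Matrix.star_eq_conjTranspose] using hz
  rw [map_sub, map_add, map_add, map_sum] at hqf
  simp only [map_smul, smul_eq_mul, conMat, objMat, qfL_border, qfL_one, qfL_E,
    Matrix.neg_mulVec, dotProduct_neg] at hqf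
  have hyy : y ⬝ᵥ y ≤ ρ ^ 2 := hball y hy
  have hsum : ∑ j, lam j * ((1/2 : ℝ) * (y ⬝ᵥ Qc j *ᵥ y + 2 * (qc j ⬝ᵥ y) + 2 * bc j)) ≤ 0 := by
    apply Finset.sum_nonpos
    intro j _
    have := hy j
    have h2 : (1/2 : ℝ) * (y ⬝ᵥ Qc j *ᵥ y + 2 * (qc j ⬝ᵥ y) + 2 * bc j) ≤ 0 := by linarith
    exact mul_nonpos_of_nonneg_of_nonpos (hlam j) h2
  have hab : al * (y ⬝ᵥ y + 1) + be ≤ 0 := by nlinarith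
  nlinarith [hqf, hsum, hab]
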